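/- Let q be a prime, k a field of characteristic different from q containing a primitive q-th root of unity, and ω ∈ k a unit that is not a q-th power in k. Let α = (y-1)^(q-1)·(y-ω) and β = y + (y-1)^(q-1)·(y-ω)·f(y) for an arbitrary polynomial f(y) ∈ k[y]. Then α is not congruent to a q-th power modulo β in k[y]. -/

import Mathlib

open Polynomial

/-- For a monic polynomial `β` over a field, the norm of `root β - c` in
`k[X]/(β)` equals `(-1) ^ deg β * β.eval c`. -/
lemma norm_root_sub_algebraMap {k : Type*} [Field k] {β : Polynomial k} (hβ : β.Monic) (c : k) :
    Algebra.norm k (AdjoinRoot.root β - algebraMap k (AdjoinRoot β) c)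
      = (-1) ^ β.natDegree * β.eval c := by
  classical
  set γ : Polynomial k := β.comp (X + C c) with hγdef
  have hγ : γ.Monic := hβ.comp_X_add_C c
  have hγne : γ ≠ 0 := hγ.ne_zero
  have hγdeg : γ.natDegree = β.natDegree := by
    rw [hγdef, natDegree_comp, natDegree_X_add_C, mul_one]
  have h1 : aeval (AdjoinRoot.root β - algebraMap k (AdjoinRoot β) c) γ = 0 := by
    rw [hγdef, aeval_comp, map_add, aeval_X, aeval_C, sub_add_cancel,
      AdjoinRoot.aeval_eq, AdjoinRoot.mk_self]
  have h2 : aeval (AdjoinRoot.root γ + algebraMap k (AdjoinRoot γ) c) β = 0 := by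
    have h0 : aeval (AdjoinRoot.root γ) γ = 0 := by
      rw [AdjoinRoot.aeval_eq, AdjoinRoot.mk_self]
    rw [hγdef, aeval_comp, map_add, aeval_X, aeval_C] at h0
    exact h0
  let F : AdjoinRoot γ →ₐ[k] AdjoinRoot β := AdjoinRoot.liftAlgHom γ (Algebra.ofId k _) _ h1
  let G : AdjoinRoot β →ₐ[k] AdjoinRoot γ := AdjoinRoot.liftAlgHom β (Algebra.ofId k _) _ h2
  have hFG : F.comp G = AlgHom.id k (AdjoinRoot β) := by
    apply AdjoinRoot.algHom_ext
    simp [F, G, AdjoinRoot.liftAlgHom_root]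
  have hGF : G.comp F = AlgHom.id k (AdjoinRoot γ) := by
    apply AdjoinRoot.algHom_ext
    simp [F, G, AdjoinRoot.liftAlgHom_root]
  let e : AdjoinRoot γ ≃ₐ[k] AdjoinRoot β := AlgEquiv.ofAlgHom F G hFG hGF
  let pb := (AdjoinRoot.powerBasis' hγ).map e
  have hgen : pb.gen = AdjoinRoot.root β - algebraMap k (AdjoinRoot β) c := by
    show e (AdjoinRoot.root γ) = _
    show F (AdjoinRoot.root γ) = _
    exact AdjoinRoot.liftAlgHom_root _ _ _ _
  have hgen' : pb.gen = e (AdjoinRoot.root γ) := rfl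
  have hmin : minpoly k pb.gen = γ := by
    rw [hgen', minpoly.algEquiv_eq, AdjoinRoot.minpoly_root hγne, hγ.leadingCoeff,
      inv_one, C_1, mul_one]
  have hdim : pb.dim = β.natDegree := by
    show (AdjoinRoot.powerBasis' hγ).dim = β.natDegree
    rw [AdjoinRoot.powerBasis'_dim, hγdeg]
  have hco : γ.coeff 0 = β.eval c := by
    rw [coeff_zero_eq_eval_zero, hγdef, eval_comp, eval_add, eval_X, eval_C, zero_add]
  have hnorm := Algebra.PowerBasis.norm_gen_eq_coeff_zero_minpoly pb
  rw [hmin, hgen, hdim, hco] at hnorm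
  exact hnorm

theorem not_qth_power_mod_beta
    (q : ℕ) (hq : q.Prime) (k : Type*) [Field k] (hchar : ringChar k ≠ q)
    (ζ : k) (hζ : IsPrimitiveRoot ζ q)
    (ω : k) (hω : ω ≠ 0) (hωq : ¬ ∃ c : k, c ^ q = ω)
    (f : Polynomial k) :
    ¬ ∃ s t : Polynomial k,
      (X - 1) ^ (q - 1) * (X - C ω) - s ^ q
        = (X + (X - 1) ^ (q - 1) * (X - C ω) * f) * t := by
  rintro ⟨s, t, h⟩
  classical
  set α : Polynomial k := (X - 1) ^ (q - 1) * (X - C ω) with hα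
  set β : Polynomial k := X + α * f with hβdef
  have hq1ne : q - 1 ≠ 0 := Nat.sub_ne_zero_of_lt hq.one_lt
  have hα1 : α.eval 1 = 0 := by simp [hα, zero_pow hq1ne]
  have hαω : α.eval ω = 0 := by simp [hα]
  have hβ1 : β.eval 1 = 1 := by simp [hβdef, hα1]
  have hβω : β.eval ω = ω := by simp [hβdef, hαω]
  have hβ0 : β ≠ 0 := by
    intro h0
    rw [h0] at hβω
    simp at hβω
    exact hω hβω.symm
  set b : k := β.leadingCoeff with hb
  have hbne : b ≠ 0 := leadingCoeff_ne_zero.mpr hβ0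
  set β' : Polynomial k := β * C b⁻¹ with hβ'
  have hβ'monic : β'.Monic := monic_mul_leadingCoeff_inv hβ0
  have hc : (C b : Polynomial k) * C b⁻¹ = 1 := by
    rw [← C_mul, mul_inv_cancel₀ hbne, C_1]
  have heq : α - s ^ q = β' * (C b * t) := by
    have hcc : β' * (C b * t) = β * t := by
      calc β' * (C b * t) = β * t * (C b⁻¹ * C b) := by rw [hβ']; ring
        _ = β * t := by rw [← C_mul, inv_mul_cancel₀ hbne, C_1, mul_one]
    rw [hcc]
    exact h
  set g : AdjoinRoot β' := AdjoinRoot.root β' with hg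
  have hg0 : aeval g β' = 0 := by
    rw [hg, AdjoinRoot.aeval_eq, AdjoinRoot.mk_self]
  have key : aeval g α = (aeval g s) ^ q := by
    have h2 := congrArg (aeval g) heq
    have hrhs : aeval g (β' * (C b * t)) = 0 := by rw [map_mul, hg0, zero_mul]
    rw [hrhs, map_sub, map_pow, sub_eq_zero] at h2
    exact h2
  have hαg : aeval g α = (g - 1) ^ (q - 1) * (g - algebraMap k (AdjoinRoot β') ω) := by
    rw [hα]
    simp [map_mul, map_pow, map_sub, aeval_X, aeval_C]
  set n : ℕ := β'.natDegree with hn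
  have hβ'1 : β'.eval 1 = b⁻¹ := by simp [hβ', hβ1]
  have hβ'ω : β'.eval ω = ω * b⁻¹ := by simp [hβ', hβω]
  have h1n : Algebra.norm k (g - 1) = (-1) ^ n * b⁻¹ := by
    have := norm_root_sub_algebraMap hβ'monic 1
    rw [map_one, hβ'1] at this
    exact this
  have hωn : Algebra.norm k (g - algebraMap k (AdjoinRoot β') ω)
      = (-1) ^ n * (ω * b⁻¹) := by
    have := norm_root_sub_algebraMap hβ'monic ω
    rw [hβ'ω] at this
    exact this
  set c : k := Algebra.norm k (aeval g s) with hcdef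
  have final : c ^ q = ((-1) ^ n * b⁻¹) ^ (q - 1) * ((-1) ^ n * (ω * b⁻¹)) := by
    rw [hcdef, ← map_pow, ← key, hαg, map_mul, map_pow, h1n, hωn]
  have hq1 : q - 1 + 1 = q := Nat.succ_pred_eq_of_pos hq.pos
  have final' : c ^ q = ((-1 : k) ^ n * b⁻¹) ^ q * ω := by
    have hpow : ((-1 : k) ^ n * b⁻¹) ^ q
        = ((-1 : k) ^ n * b⁻¹) ^ (q - 1) * ((-1 : k) ^ n * b⁻¹) := by
      rw [← pow_succ, hq1]
    rw [final, hpow]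
    ring
  have hsq : ((-1 : k) ^ n) * ((-1 : k) ^ n) = 1 := by
    rw [← pow_add]
    exact Even.neg_one_pow ⟨n, rfl⟩
  have hbb : b⁻¹ * b = 1 := inv_mul_cancel₀ hbne
  apply hωq
  refine ⟨c * (-1) ^ n * b, ?_⟩
  have key2 : (((-1 : k) ^ n * b⁻¹) * ((-1 : k) ^ n * b)) ^ q = 1 := by
    rw [show ((-1 : k) ^ n * b⁻¹) * ((-1 : k) ^ n * b)
        = ((-1 : k) ^ n * (-1 : k) ^ n) * (b⁻¹ * b) by ring, hsq, hbb, one_mul, one_pow]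
  calc (c * (-1 : k) ^ n * b) ^ q
      = c ^ q * ((-1 : k) ^ n * b) ^ q := by ring
    _ = ((-1 : k) ^ n * b⁻¹) ^ q * ω * ((-1 : k) ^ n * b) ^ q := by rw [final']
    _ = (((-1 : k) ^ n * b⁻¹) * ((-1 : k) ^ n * b)) ^ q * ω := by ring
    _ = ω := by rw [key2, one_mul]
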